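/- Let n ≥ 1 be an integer and C₀ > 0, C₁ > 0, c > 0. Then there exist τ > 0, C' > 0 and h₀ ∈ (0,1] (depending only on n, C₀, C₁, c) with the following property: for every h ∈ (0,h₀] and every family of complex numbers (a_α)_{α∈ℕⁿ} with |a_α| ≤ C₀^{|α|}(h^{-1}+|α|)^{|α|}·e^{-c/h} for all α ∈ ℕⁿ, and every ζ ∈ ℂⁿ with max_i |ζ_i| ≤ τ, the series ∑_{α∈ℕⁿ} a_α ζ^α/α! converges absolutely and |∑_{α∈ℕⁿ} a_α ζ^α/α!| ≤ e^{-C'/h}. -/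

import Mathlib

open scoped ENNReal NNReal

private lemma pow_div_factorial_le_exp {x : ℝ} (hx : 0 ≤ x) (m : ℕ) :
    x ^ m / m.factorial ≤ Real.exp x := by
  calc x ^ m / m.factorial
      ≤ ∑ i ∈ Finset.range (m+1), x ^ i / i.factorial :=
        Finset.single_le_sum (f := fun i => x ^ i / (i.factorial : ℝ))
          (fun i _ => by positivity) (Finset.self_mem_range_succ m)
    _ ≤ Real.exp x := Real.sum_le_exp_of_nonneg hx (m+1)

private lemma tsum_pi_prod (g : ℕ → ℝ≥0∞) :
    ∀ n : ℕ, ∑' α : Fin n → ℕ, ∏ i, g (α i) = (∑' m, g m) ^ n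
  | 0 => by
      rw [tsum_eq_single (fun i : Fin 0 => (0:ℕ))
        (fun b hb => absurd (Subsingleton.elim b _) hb)]
      simp
  | n+1 => by
      rw [← (Fin.consEquiv (fun _ : Fin (n+1) => ℕ)).tsum_eq]
      have h1 : ∀ p : ℕ × (Fin n → ℕ),
          (∏ i, g ((Fin.consEquiv (fun _ : Fin (n+1) => ℕ)) p i))
            = g p.1 * ∏ i, g (p.2 i) := by
        intro p
        simp [Fin.consEquiv, Fin.prod_univ_succ]
      calc ∑' p : ℕ × (Fin n → ℕ), ∏ i, g ((Fin.consEquiv (fun _ : Fin (n+1) => ℕ)) p i)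
          = ∑' p : ℕ × (Fin n → ℕ), g p.1 * ∏ i, g (p.2 i) := by
            exact tsum_congr h1
        _ = ∑' (x : ℕ) (v : Fin n → ℕ), g x * ∏ i, g (v i) := ENNReal.tsum_prod (f := fun (x : ℕ) (v : Fin n → ℕ) => g x * ∏ i, g (v i))
        _ = (∑' m, g m) * ∑' v : Fin n → ℕ, ∏ i, g (v i) := by
            simp_rw [ENNReal.tsum_mul_left]
            rw [ENNReal.tsum_mul_right]
        _ = (∑' m, g m) ^ (n+1) := by rw [tsum_pi_prod g n, pow_succ]; ring

private lemma exp_tsum (x : ℝ) : Real.exp x = ∑' m : ℕ, x ^ m / m.factorial := by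
  rw [Real.exp_eq_exp_ℝ, NormedSpace.exp_eq_tsum_div]

theorem stmt11 (n : ℕ) (hn : 1 ≤ n) (C₀ C₁ c : ℝ)
    (hC₀ : 0 < C₀) (hC₁ : 0 < C₁) (hc : 0 < c) :
    ∃ τ > (0:ℝ), ∃ C' > (0:ℝ), ∃ h₀ ∈ Set.Ioc (0:ℝ) 1,
      ∀ h ∈ Set.Ioc (0:ℝ) h₀, ∀ a : (Fin n → ℕ) → ℂ,
        (∀ α : Fin n → ℕ, ‖a α‖ ≤
          C₀ ^ (∑ i, α i) * (h⁻¹ + ((∑ i, α i : ℕ) : ℝ)) ^ (∑ i, α i) * Real.exp (-c / h)) →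
        ∀ ζ : Fin n → ℂ, (⨆ i, ‖ζ i‖) ≤ τ →
          Summable (fun α : Fin n → ℕ =>
            ‖a α * (∏ i, ζ i ^ α i) / (∏ i, ((α i).factorial : ℂ))‖) ∧
          ‖∑' α : Fin n → ℕ,
              a α * (∏ i, ζ i ^ α i) / (∏ i, ((α i).factorial : ℂ))‖
            ≤ Real.exp (-C' / h) := by
  have hn0 : (0:ℝ) < n := by exact_mod_cast hn
  set τ : ℝ := min (c/(4*n*C₀)) (1/(4*C₀*Real.exp n)) with hτdef
  have hτpos : 0 < τ := lt_min (by positivity) (by positivity)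
  have hlogpos : 0 < Real.log (1 + 2^n) := Real.log_pos (by
    have : (0:ℝ) < 2^n := by positivity
    linarith)
  refine ⟨τ, hτpos, c/4, by positivity, min 1 (c/(4*Real.log (1+2^n))),
    ⟨lt_min one_pos (by positivity), min_le_left _ _⟩, ?_⟩
  rintro h ⟨hh0, hh1⟩ a ha ζ hζ
  have hh1' : h ≤ 1 := hh1.trans (min_le_left _ _)
  have hζi : ∀ i, ‖ζ i‖ ≤ τ := fun i =>
    le_trans (le_ciSup (f := fun j => ‖ζ j‖) (Set.Finite.bddAbove (Set.finite_range _)) i) hζ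
  set L : ℝ := 2*C₀*τ with hLdef
  have hLpos : 0 < L := by positivity
  set μ : ℝ := L * Real.exp n with hμdef
  have hμpos : 0 < μ := by positivity
  have hμhalf : μ ≤ 1/2 := by
    have h1 : τ ≤ 1/(4*C₀*Real.exp n) := min_le_right _ _
    have he : (0:ℝ) < Real.exp n := Real.exp_pos _
    have h2 : 2*C₀*Real.exp n * τ ≤ 2*C₀*Real.exp n * (1/(4*C₀*Real.exp n)) :=
      mul_le_mul_of_nonneg_left h1 (by positivity)
    calc μ = 2*C₀*Real.exp n * τ := by ring
      _ ≤ 2*C₀*Real.exp n * (1/(4*C₀*Real.exp n)) := h2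
      _ = 1/2 := by field_simp; ring
  have hnL : (n:ℝ) * L ≤ c/2 := by
    have h1 : τ ≤ c/(4*n*C₀) := min_le_left _ _
    have h2 : 2*C₀*(n:ℝ) * τ ≤ 2*C₀*(n:ℝ) * (c/(4*n*C₀)) :=
      mul_le_mul_of_nonneg_left h1 (by positivity)
    calc (n:ℝ) * L = 2*C₀*(n:ℝ) * τ := by ring
      _ ≤ 2*C₀*(n:ℝ) * (c/(4*n*C₀)) := h2
      _ = c/2 := by field_simp; ring
  -- termwise real bound
  have key : ∀ α : Fin n → ℕ,
      ‖a α * (∏ i, ζ i ^ α i) / (∏ i, ((α i).factorial : ℂ))‖ ≤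
        Real.exp (-c/h) *
          ((∏ i, (L/h) ^ (α i) / ((α i).factorial : ℝ)) + ∏ i, μ ^ (α i)) := by
    intro α
    set k := ∑ i, α i with hk
    have hA : (0:ℝ) < ∏ i, ((α i).factorial : ℝ) := by positivity
    have hnorm : ‖a α * (∏ i, ζ i ^ α i) / (∏ i, ((α i).factorial : ℂ))‖
        = ‖a α‖ * (∏ i, ‖ζ i‖ ^ α i) / (∏ i, ((α i).factorial : ℝ)) := by
      simp [norm_div, norm_mul, norm_prod, norm_pow,
        Complex.norm_natCast]
    have hz : (∏ i, ‖ζ i‖ ^ α i) ≤ τ ^ k := by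
      rw [hk, ← Finset.prod_pow_eq_pow_sum]
      exact Finset.prod_le_prod (fun i _ => by positivity)
        (fun i _ => pow_le_pow_left₀ (norm_nonneg _) (hζi i) _)
    have ha' : ‖a α‖ ≤ C₀ ^ k * (h⁻¹ + (k:ℝ)) ^ k * Real.exp (-c/h) := by
      exact ha α
    have hsplit : (h⁻¹ + (k:ℝ)) ^ k ≤ 2 ^ k * ((h⁻¹) ^ k + (k:ℝ) ^ k) := by
      have hb : h⁻¹ + (k:ℝ) ≤ 2 * max h⁻¹ (k:ℝ) := by
        have := le_max_left h⁻¹ (k:ℝ); have := le_max_right h⁻¹ (k:ℝ); linarith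
      calc (h⁻¹ + (k:ℝ)) ^ k ≤ (2 * max h⁻¹ (k:ℝ)) ^ k :=
            pow_le_pow_left₀ (by positivity) hb _
        _ = 2 ^ k * (max h⁻¹ (k:ℝ)) ^ k := mul_pow _ _ _
        _ ≤ 2 ^ k * ((h⁻¹) ^ k + (k:ℝ) ^ k) := by
            rcases max_choice h⁻¹ (k:ℝ) with hm | hm <;> rw [hm] <;>
              [exact mul_le_mul_of_nonneg_left (le_add_of_nonneg_right (by positivity)) (by positivity);
               exact mul_le_mul_of_nonneg_left (le_add_of_nonneg_left (by positivity)) (by positivity)]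
    have step1 : ‖a α * (∏ i, ζ i ^ α i) / (∏ i, ((α i).factorial : ℂ))‖ ≤
        Real.exp (-c/h) * (L ^ k * ((h⁻¹) ^ k + (k:ℝ) ^ k)) / (∏ i, ((α i).factorial : ℝ)) := by
      rw [hnorm]
      have hnum : ‖a α‖ * (∏ i, ‖ζ i‖ ^ α i) ≤
          Real.exp (-c/h) * (L ^ k * ((h⁻¹) ^ k + (k:ℝ) ^ k)) := by
        calc ‖a α‖ * (∏ i, ‖ζ i‖ ^ α i)
            ≤ (C₀ ^ k * (h⁻¹ + (k:ℝ)) ^ k * Real.exp (-c/h)) * τ ^ k :=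
              mul_le_mul ha' hz (Finset.prod_nonneg (fun i _ => by positivity))
                (by positivity)
          _ ≤ (C₀ ^ k * (2 ^ k * ((h⁻¹) ^ k + (k:ℝ) ^ k)) * Real.exp (-c/h)) * τ ^ k := by
              gcongr
          _ = Real.exp (-c/h) * (L ^ k * ((h⁻¹) ^ k + (k:ℝ) ^ k)) := by
              rw [hLdef, mul_pow, mul_pow]; ring
      exact div_le_div_of_nonneg_right hnum hA.le
    have e1 : ∏ i, ((L/h) ^ (α i) / ((α i).factorial : ℝ))
        = L ^ k * (h⁻¹) ^ k / (∏ i, ((α i).factorial : ℝ)) := by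
      rw [Finset.prod_div_distrib, Finset.prod_pow_eq_pow_sum, ← hk, div_pow]
      ring
    have e2 : L ^ k * (k:ℝ) ^ k / (∏ i, ((α i).factorial : ℝ)) ≤ ∏ i, μ ^ (α i) := by
      have hprod1 : ∏ i, (L ^ (α i) * ((k:ℝ) ^ (α i) / ((α i).factorial : ℝ)))
          = L ^ k * (k:ℝ) ^ k / (∏ i, ((α i).factorial : ℝ)) := by
        rw [Finset.prod_mul_distrib, Finset.prod_div_distrib, Finset.prod_pow_eq_pow_sum,
          Finset.prod_pow_eq_pow_sum, ← hk]
        ring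
      have hprod2 : ∏ i, μ ^ (α i) = μ ^ k := by
        rw [Finset.prod_pow_eq_pow_sum, ← hk]
      rw [← hprod1, hprod2]
      calc ∏ i, (L ^ (α i) * ((k:ℝ) ^ (α i) / ((α i).factorial : ℝ)))
          ≤ ∏ i, (L ^ (α i) * Real.exp (k:ℝ)) :=
            Finset.prod_le_prod (fun i _ => by positivity)
              (fun i _ => mul_le_mul_of_nonneg_left
                (pow_div_factorial_le_exp (by positivity) _) (by positivity))
        _ = L ^ k * (Real.exp ((k:ℝ))) ^ n := by
            rw [Finset.prod_mul_distrib, Finset.prod_pow_eq_pow_sum, ← hk, Finset.prod_const,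
              Finset.card_univ, Fintype.card_fin]
        _ = μ ^ k := by
            have hhe : (Real.exp ((k:ℝ))) ^ n = (Real.exp ((n:ℝ))) ^ k := by
              rw [← Real.exp_nat_mul, ← Real.exp_nat_mul]
              exact congrArg Real.exp (mul_comm _ _)
            rw [hhe, hμdef]
            exact (mul_pow _ _ _).symm
    refine step1.trans ?_
    have hsplit2 : Real.exp (-c/h) * (L ^ k * ((h⁻¹) ^ k + (k:ℝ) ^ k)) / (∏ i, ((α i).factorial : ℝ))
        = Real.exp (-c/h) * (L ^ k * (h⁻¹) ^ k / (∏ i, ((α i).factorial : ℝ))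
            + L ^ k * (k:ℝ) ^ k / (∏ i, ((α i).factorial : ℝ))) := by
      ring
    rw [hsplit2]
    exact mul_le_mul_of_nonneg_left (add_le_add e1.ge e2) (Real.exp_nonneg _)
  -- ENNReal part
  set E := fun α : Fin n → ℕ => a α * (∏ i, ζ i ^ α i) / (∏ i, ((α i).factorial : ℂ)) with hEdef
  have hg1 : ∑' m : ℕ, ENNReal.ofReal ((L/h) ^ m / (m.factorial : ℝ))
      = ENNReal.ofReal (Real.exp (L/h)) := by
    rw [exp_tsum, ENNReal.ofReal_tsum_of_nonneg (fun m => by positivity)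
      (Real.summable_pow_div_factorial _)]
  have hg2 : ∑' m : ℕ, ENNReal.ofReal μ ^ m ≤ 2 := by
    have hμ' : ENNReal.ofReal μ ≤ 2⁻¹ := by
      have : ((2:ℝ≥0∞))⁻¹ = ENNReal.ofReal (1/2) := by
        rw [ENNReal.ofReal_div_of_pos two_pos, ENNReal.ofReal_one, ENNReal.ofReal_ofNat, one_div]
      rw [this]
      exact ENNReal.ofReal_le_ofReal hμhalf
    calc ∑' m : ℕ, ENNReal.ofReal μ ^ m ≤ ∑' m : ℕ, (2⁻¹:ℝ≥0∞) ^ m :=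
          ENNReal.tsum_le_tsum (fun m => pow_le_pow_left' hμ' m)
      _ = (1 - 2⁻¹)⁻¹ := ENNReal.tsum_geometric _
      _ = 2 := by rw [ENNReal.one_sub_inv_two, inv_inv]
  have hreal : Real.exp (-c/h) * (Real.exp (L/h) ^ n + 2^n) ≤ Real.exp (-(c/4)/h) := by
    have e1 : Real.exp (L/h) ^ n = Real.exp ((n:ℝ)*(L/h)) := (Real.exp_nat_mul _ _).symm
    have h2 : Real.exp ((n:ℝ)*(L/h)) ≤ Real.exp ((c/2)/h) := by
      apply Real.exp_le_exp.mpr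
      rw [← mul_div_assoc]
      exact div_le_div_of_nonneg_right hnL hh0.le
    have key2 : Real.exp (-c/h) * Real.exp ((c/2)/h) = Real.exp (-(c/2)/h) := by
      rw [← Real.exp_add]; congr 1; field_simp; ring
    have key3 : Real.exp (-c/h) ≤ Real.exp (-(c/2)/h) := by
      apply Real.exp_le_exp.mpr
      rw [div_le_div_iff₀ hh0 hh0]
      nlinarith [hh0.le, hc.le]
    have hhh : h ≤ c/(4*Real.log (1+2^n)) := hh1.trans (min_le_right _ _)
    have hlog2 : Real.log (1+2^n) ≤ (c/4)/h := by
      rw [le_div_iff₀ hh0]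
      have h4 : h * (4*Real.log (1+2^n)) ≤ c := by
        rw [← le_div_iff₀ (by positivity : (0:ℝ) < 4*Real.log (1+2^n))] at *
        exact hhh
      linarith
    have hlg : (1:ℝ) + 2^n ≤ Real.exp ((c/4)/h) := by
      calc (1:ℝ)+2^n = Real.exp (Real.log (1+2^n)) := (Real.exp_log (by positivity)).symm
        _ ≤ Real.exp ((c/4)/h) := Real.exp_le_exp.mpr hlog2
    have hfin : Real.exp ((c/4)/h) * Real.exp (-(c/2)/h) = Real.exp (-(c/4)/h) := by
      rw [← Real.exp_add]; congr 1; field_simp; ring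
    calc Real.exp (-c/h) * (Real.exp (L/h) ^ n + 2^n)
        ≤ Real.exp (-c/h) * (Real.exp ((c/2)/h) + 2^n) := by
          rw [e1]
          exact mul_le_mul_of_nonneg_left (add_le_add h2 le_rfl) (Real.exp_nonneg _)
      _ = Real.exp (-c/h) * Real.exp ((c/2)/h) + 2^n * Real.exp (-c/h) := by ring
      _ ≤ Real.exp (-(c/2)/h) + 2^n * Real.exp (-(c/2)/h) := by
          rw [key2]
          have : (0:ℝ) ≤ 2^n := by positivity
          nlinarith [key3]
      _ = (1+2^n) * Real.exp (-(c/2)/h) := by ring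
      _ ≤ Real.exp ((c/4)/h) * Real.exp (-(c/2)/h) :=
          mul_le_mul_of_nonneg_right hlg (Real.exp_nonneg _)
      _ = Real.exp (-(c/4)/h) := hfin
  have hS : ∑' α : Fin n → ℕ, (‖E α‖₊ : ℝ≥0∞) ≤ ENNReal.ofReal (Real.exp (-(c/4)/h)) := by
    have hb1 : ∀ α : Fin n → ℕ, (‖E α‖₊ : ℝ≥0∞) ≤
        ENNReal.ofReal (Real.exp (-c/h)) *
          ((∏ i, ENNReal.ofReal ((L/h) ^ (α i) / ((α i).factorial : ℝ))) +
            ∏ i, ENNReal.ofReal μ ^ (α i)) := by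
      intro α
      rw [← enorm_eq_nnnorm, ← ofReal_norm]
      refine le_trans (ENNReal.ofReal_le_ofReal (key α)) ?_
      rw [ENNReal.ofReal_mul (Real.exp_nonneg _),
        ENNReal.ofReal_add (Finset.prod_nonneg (fun i _ => by positivity))
          (Finset.prod_nonneg (fun i _ => by positivity)),
        ENNReal.ofReal_prod_of_nonneg (fun i _ => by positivity),
        ENNReal.ofReal_prod_of_nonneg (fun i _ => by positivity)]
      simp_rw [ENNReal.ofReal_pow hμpos.le]
      exact le_rfl
    calc ∑' α : Fin n → ℕ, (‖E α‖₊ : ℝ≥0∞)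
        ≤ ∑' α : Fin n → ℕ, ENNReal.ofReal (Real.exp (-c/h)) *
            ((∏ i, ENNReal.ofReal ((L/h) ^ (α i) / ((α i).factorial : ℝ))) +
              ∏ i, ENNReal.ofReal μ ^ (α i)) := ENNReal.tsum_le_tsum hb1
      _ = ENNReal.ofReal (Real.exp (-c/h)) *
            ((∑' α : Fin n → ℕ, ∏ i, ENNReal.ofReal ((L/h) ^ (α i) / ((α i).factorial : ℝ))) +
              ∑' α : Fin n → ℕ, ∏ i, ENNReal.ofReal μ ^ (α i)) := by
          rw [ENNReal.tsum_mul_left, ENNReal.tsum_add]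
      _ = ENNReal.ofReal (Real.exp (-c/h)) *
            (ENNReal.ofReal (Real.exp (L/h)) ^ n + (∑' m : ℕ, ENNReal.ofReal μ ^ m) ^ n) := by
          rw [tsum_pi_prod (fun m => ENNReal.ofReal ((L/h) ^ m / (m.factorial : ℝ))) n,
            tsum_pi_prod (fun m => ENNReal.ofReal μ ^ m) n, hg1]
      _ ≤ ENNReal.ofReal (Real.exp (-c/h)) *
            (ENNReal.ofReal (Real.exp (L/h)) ^ n + 2 ^ n) := by
          gcongr
      _ = ENNReal.ofReal (Real.exp (-c/h) * (Real.exp (L/h) ^ n + 2^n)) := by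
          rw [ENNReal.ofReal_mul (Real.exp_nonneg _), ENNReal.ofReal_add (by positivity) (by positivity),
            ENNReal.ofReal_pow (Real.exp_nonneg _), ENNReal.ofReal_pow (by norm_num : (0:ℝ) ≤ 2),
            ENNReal.ofReal_ofNat]
      _ ≤ ENNReal.ofReal (Real.exp (-(c/4)/h)) := ENNReal.ofReal_le_ofReal hreal
  have hS_ne : ∑' α : Fin n → ℕ, (‖E α‖₊ : ℝ≥0∞) ≠ ⊤ :=
    ne_top_of_le_ne_top ENNReal.ofReal_ne_top hS
  have hsum_nn : Summable (fun α : Fin n → ℕ => ‖E α‖₊) :=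
    ENNReal.tsum_coe_ne_top_iff_summable.mp hS_ne
  have hsum : Summable (fun α : Fin n → ℕ => ‖E α‖) := by
    simpa using NNReal.summable_coe.mpr hsum_nn
  constructor
  · simpa [hEdef] using hsum
  · have h1 : ‖∑' α : Fin n → ℕ, E α‖ ≤ ∑' α : Fin n → ℕ, ‖E α‖ := norm_tsum_le_tsum_norm hsum
    have h2 : ∑' α : Fin n → ℕ, ‖E α‖ = (∑' α : Fin n → ℕ, (‖E α‖₊ : ℝ≥0∞)).toReal := by
      rw [← ENNReal.coe_tsum hsum_nn, ENNReal.coe_toReal, NNReal.coe_tsum]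
      simp
    have h3 : (∑' α : Fin n → ℕ, (‖E α‖₊ : ℝ≥0∞)).toReal ≤ Real.exp (-(c/4)/h) := by
      have := ENNReal.toReal_mono ENNReal.ofReal_ne_top hS
      rwa [ENNReal.toReal_ofReal (Real.exp_nonneg _)] at this
    calc ‖∑' α : Fin n → ℕ, E α‖ = ‖∑' α : Fin n → ℕ, E α‖ :=
          rfl
      _ ≤ ∑' α : Fin n → ℕ, ‖E α‖ := h1
      _ ≤ Real.exp (-(c/4)/h) := by rw [h2]; exact h3
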